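/- Let $G$ be an abelian group with two Hausdorff group topologies $\tau_1, \tau_2$, let $(a_n) \to 0$ in $(G,\tau_1)$, $(b_n) \to 0$ in $(G,\tau_2)$, and suppose some nonzero $g\in G$ satisfies: for every $n_0$ there exist $n,m \ge n_0$ with $g = b_m - a_n$. Then the topology $\tau_1 \vee \tau_2$ (the supremum of the two topologies) on $G$ is not complete (as a topological group with its two-sided uniformity). -/

import Mathlib

open Filter

theorem stmt10 (G : Type*) [AddCommGroup G] (τ1 τ2 : TopologicalSpace G)
    (h1 : @IsTopologicalAddGroup G τ1 _) (h2 : @IsTopologicalAddGroup G τ2 _)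
    (ht1 : @T2Space G τ1) (ht2 : @T2Space G τ2)
    (a b : ℕ → G)
    (ha : Tendsto a atTop (@nhds G τ1 0)) (hb : Tendsto b atTop (@nhds G τ2 0))
    (g : G) (hg : g ≠ 0)
    (hgab : ∀ n₀ : ℕ, ∃ n ≥ n₀, ∃ m ≥ n₀, g = b m - a n) :
    ¬ @CompleteSpace G
        (@IsTopologicalAddGroup.rightUniformSpace G _ (τ1 ⊓ τ2)
          (topologicalAddGroup_inf h1 h2)) := by
  intro hc
  -- choose the subsequences
  choose n hn m hm hgnm using hgab
  -- x k = a (n k)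
  set x : ℕ → G := fun k => a (n k) with hx
  have hnt : Tendsto n atTop atTop := tendsto_atTop_mono hn tendsto_id
  have hmt : Tendsto m atTop atTop := tendsto_atTop_mono hm tendsto_id
  -- x tends to 0 in τ1
  have hx1 : Tendsto x atTop (@nhds G τ1 0) := ha.comp hnt
  -- x tends to -g in τ2 since x k = b (m k) - g
  have hx2 : Tendsto x atTop (@nhds G τ2 (-g)) := by
    have : Tendsto (fun k => b (m k) - g) atTop (@nhds G τ2 (0 - g)) := by
      letI := τ2
      exact (hb.comp hmt).sub tendsto_const_nhds
    simp only [zero_sub] at this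
    refine this.congr fun k => ?_
    have := hgnm k
    have : a (n k) = b (m k) - g := by
      rw [this]; abel
    simp [hx, this]
  letI : TopologicalSpace G := τ1 ⊓ τ2
  haveI : IsTopologicalAddGroup G := topologicalAddGroup_inf h1 h2
  letI U : UniformSpace G := IsTopologicalAddGroup.rightUniformSpace G
  -- the differences tend to 0 in τ1 ⊓ τ2
  have hdiff : Tendsto (fun p : ℕ × ℕ => x p.2 - x p.1) (atTop ×ˢ atTop)
      (@nhds G (τ1 ⊓ τ2) 0) := by
    rw [nhds_inf (t₁ := τ1) (t₂ := τ2)]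
    refine tendsto_inf.2 ⟨?_, ?_⟩
    · letI := τ1
      haveI := h1
      have h2' : Tendsto (fun p : ℕ × ℕ => x p.2) (atTop ×ˢ atTop) (@nhds G τ1 0) :=
        hx1.comp tendsto_snd
      have h1' : Tendsto (fun p : ℕ × ℕ => x p.1) (atTop ×ˢ atTop) (@nhds G τ1 0) :=
        hx1.comp tendsto_fst
      simpa using h2'.sub h1'
    · letI := τ2
      haveI := h2
      have h2' : Tendsto (fun p : ℕ × ℕ => x p.2) (atTop ×ˢ atTop) (@nhds G τ2 (-g)) :=
        hx2.comp tendsto_snd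
      have h1' : Tendsto (fun p : ℕ × ℕ => x p.1) (atTop ×ˢ atTop) (@nhds G τ2 (-g)) :=
        hx2.comp tendsto_fst
      simpa using h2'.sub h1'
  -- hence x is Cauchy
  have hcauchy : CauchySeq x := by
    refine ⟨map_neBot, ?_⟩
    rw [uniformity_eq_comap_nhds_zero' G, ← map_le_iff_le_comap]
    simp only [← sub_eq_add_neg]
    calc Filter.map (fun p : G × G => p.2 - p.1) (map x atTop ×ˢ map x atTop)
        = Filter.map (fun p : ℕ × ℕ => x p.2 - x p.1) (atTop ×ˢ atTop) := by
          rw [prod_map_map_eq, Filter.map_map]; rfl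
      _ ≤ _ := hdiff
  obtain ⟨y, hy⟩ := cauchySeq_tendsto_of_complete hcauchy
  have hy' : Tendsto x atTop (@nhds G (τ1 ⊓ τ2) y) := hy
  rw [nhds_inf (t₁ := τ1) (t₂ := τ2), tendsto_inf] at hy'
  have e1 : y = 0 := @tendsto_nhds_unique G ℕ τ1 ht1 x atTop y 0 atTop_neBot hy'.1 hx1
  have e2 : y = -g := @tendsto_nhds_unique G ℕ τ2 ht2 x atTop y (-g) atTop_neBot hy'.2 hx2
  apply hg
  rw [e1] at e2
  simpa using e2.symm
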